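/- Let Π be a ground logic program over atoms A with rules indexed by a finite type R, let M ⊆ A be a supported model of Π, and set M' = M ∪ { dm_r : r ∈ R, the body of rule r is false in M }. Then the least model N of the Gelfond–Lifschitz reduct (T(Π))^{M'} equals M'. -/
import Mathlib


/-- A ground rule: head ← body⁺, not body⁻. -/
structure Rule (A : Type*) where
  head : A
  bodyPos : Finset A
  bodyNeg : Finset A
deriving DecidableEq

/-- The body of rule `r` is true in interpretation `M`:
`body⁺(r) ⊆ M` and `body⁻(r) ∩ M = ∅`. -/
def BodyTrue {A : Type*} (M : Set A) (r : Rule A) : Prop :=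
  ↑r.bodyPos ⊆ M ∧ ∀ a ∈ r.bodyNeg, a ∉ M

/-- `M` is a model of the program `P` (a family of rules indexed by `R`). -/
def IsModel {A R : Type*} (P : R → Rule A) (M : Set A) : Prop :=
  ∀ r, BodyTrue M (P r) → (P r).head ∈ M

/-- `M` is a supported model of `P`: a model in which every true atom
is the head of some rule of `P` whose body is true in `M`. -/
def IsSupported {A R : Type*} (P : R → Rule A) (M : Set A) : Prop :=
  IsModel P M ∧ ∀ a ∈ M, ∃ r, (P r).head = a ∧ ↑(P r).bodyPos ⊆ M ∧
    ∀ b ∈ (P r).bodyNeg, b ∉ M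

/-- `N` is a model of the Gelfond–Lifschitz reduct `P^M`: for every rule of `P`
surviving the reduct (i.e. with `body⁻(r) ∩ M = ∅`), whose negative literals are
removed, if its positive body holds in `N` then so does its head. -/
def ReductModel {A R : Type*} (P : R → Rule A) (M N : Set A) : Prop :=
  ∀ r, (∀ a ∈ (P r).bodyNeg, a ∉ M) → ↑(P r).bodyPos ⊆ N → (P r).head ∈ N

/-- `M` is a stable model of `P`: `M` is the least model of the reduct `P^M`. -/
def IsStable {A R : Type*} (P : R → Rule A) (M : Set A) : Prop :=
  ReductModel P M M ∧ ∀ N, ReductModel P M N → M ⊆ N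

/-- Index type for the rules of the transformed program `T(P)`: one rule
`head(r) ← not dm_r` per rule `r`, one rule `dm_r ← not l` per `l ∈ body⁺(r)`,
and one rule `dm_r ← l` per `l ∈ body⁻(r)`. -/
abbrev TransIdx {A R : Type*} (P : R → Rule A) : Type _ :=
  R ⊕ ((Σ r : R, {l // l ∈ (P r).bodyPos}) ⊕ (Σ r : R, {l // l ∈ (P r).bodyNeg}))

/-- The transformed program `T(P)` over atoms `A ⊕ R`, where `Sum.inr r`
plays the role of the fresh auxiliary atom `dm_r`. -/
def Transform {A R : Type*} (P : R → Rule A) : TransIdx P → Rule (A ⊕ R)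
  | Sum.inl r => ⟨Sum.inl (P r).head, ∅, {Sum.inr r}⟩
  | Sum.inr (Sum.inl ⟨r, l⟩) => ⟨Sum.inr r, ∅, {Sum.inl l.1}⟩
  | Sum.inr (Sum.inr ⟨r, l⟩) => ⟨Sum.inr r, {Sum.inl l.1}, ∅⟩

/-- `Lift P M = M ∪ { dm_r | the body of rule r is false in M }`,
viewing `M ⊆ A` as a subset of `A ⊕ R` via the left injection. -/
def Lift {A R : Type*} (P : R → Rule A) (M : Set A) : Set (A ⊕ R) :=
  Sum.inl '' M ∪ Sum.inr '' {r | ¬ BodyTrue M (P r)}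

/-- If `M` is a supported model of `P` and
`M' = M ∪ { dm_r | body of r is false in M }`, then the least model `N` of the
Gelfond–Lifschitz reduct `(T(P))^{M'}` equals `M'`. -/
theorem least_model_of_transform_reduct_eq_lift
    {A R : Type*} [Fintype R] (P : R → Rule A) (M : Set A)
    (h : IsSupported P M) (N : Set (A ⊕ R))
    (hN : ReductModel (Transform P) (Lift P M) N)
    (hleast : ∀ N₂, ReductModel (Transform P) (Lift P M) N₂ → N ⊆ N₂) :
    N = Lift P M := by
  have hinl : ∀ a : A, Sum.inl a ∈ Lift P M ↔ a ∈ M := by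
    intro a
    constructor
    · rintro (⟨b, hb, hba⟩ | ⟨r, _, hra⟩)
      · cases hba; exact hb
      · cases hra
    · intro ha; exact Or.inl ⟨a, ha, rfl⟩
  have hinr : ∀ r : R, Sum.inr r ∈ Lift P M ↔ ¬ BodyTrue M (P r) := by
    intro r
    constructor
    · rintro (⟨b, _, hb⟩ | ⟨s, hs, hsr⟩)
      · cases hb
      · cases hsr; exact hs
    · intro hr; exact Or.inr ⟨r, hr, rfl⟩
  -- M-atoms are in N
  have hMN : ∀ a ∈ M, Sum.inl a ∈ N := by
    intro a ha
    obtain ⟨r, hhead, hpos, hneg⟩ := h.2 a ha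
    have := hN (Sum.inl r) (by
      intro x hx hxL
      simp only [Transform, Finset.mem_singleton] at hx
      subst hx
      exact (hinr r).mp hxL ⟨hpos, hneg⟩)
      (by simp [Transform])
    simpa [Transform, hhead] using this
  -- dm_r atoms are in N
  have hDN : ∀ r : R, ¬ BodyTrue M (P r) → Sum.inr r ∈ N := by
    intro r hr
    rw [BodyTrue, not_and_or] at hr
    rcases hr with hr | hr
    · obtain ⟨l, hl, hlM⟩ := by
        simpa [Set.subset_def] using hr
      have := hN (Sum.inr (Sum.inl ⟨r, ⟨l, hl⟩⟩)) (by
        intro x hx hxL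
        simp only [Transform, Finset.mem_singleton] at hx
        subst hx
        exact hlM ((hinl l).mp hxL))
        (by simp [Transform])
      simpa [Transform] using this
    · push_neg at hr
      obtain ⟨l, hl, hlM⟩ := hr
      have := hN (Sum.inr (Sum.inr ⟨r, ⟨l, hl⟩⟩)) (by
        intro x hx; simp [Transform] at hx)
        (by
          intro x hx
          simp only [Transform, Finset.coe_singleton, Set.mem_singleton_iff] at hx
          subst hx
          exact hMN l hlM)
      simpa [Transform] using this
  have hsub : Lift P M ⊆ N := by
    rintro x (⟨a, ha, rfl⟩ | ⟨r, hr, rfl⟩)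
    · exact hMN a ha
    · exact hDN r hr
  -- Lift P M is itself a reduct model
  have hLmodel : ReductModel (Transform P) (Lift P M) (Lift P M) := by
    rintro (r | ⟨r, l, hl⟩ | ⟨r, l, hl⟩) hneg hpos
    · have hbt : BodyTrue M (P r) := by
        by_contra hbt
        exact hneg (Sum.inr r) (by simp [Transform]) ((hinr r).mpr hbt)
      exact (hinl _).mpr (h.1 r hbt)
    · have hlM : l ∉ M := fun hlM =>
        hneg (Sum.inl l) (by simp [Transform]) ((hinl l).mpr hlM)
      exact (hinr r).mpr (fun hbt => hlM (hbt.1 hl))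
    · have hlM : l ∈ M := (hinl l).mp (hpos (by simp [Transform]))
      exact (hinr r).mpr (fun hbt => hbt.2 l hl hlM)
  exact Set.Subset.antisymm (hleast _ hLmodel) hsub
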